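/- Let G be a connected graph with minimum degree at least 2 that is not an even cycle and in which no edge connects two vertices of degree at least 3. If G' is obtained from G by subdividing one edge once, then ν₂(G') ≥ ν₂(G) + 1. -/

import Mathlib

structure Multigraph where
  V : Type
  E : Type
  fintypeV : Fintype V
  decEqV : DecidableEq V
  fintypeE : Fintype E
  decEqE : DecidableEq E
  ends : E → Sym2 V

attribute [instance] Multigraph.fintypeV Multigraph.decEqV Multigraph.fintypeE Multigraph.decEqE

namespace Multigraph

/-- `e` is a loop if both of its endpoints coincide. -/
def IsLoop (G : Multigraph) (e : G.E) : Prop := (G.ends e).IsDiag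

/-- A loopless multigraph. -/
def Loopless (G : Multigraph) : Prop := ∀ e, ¬ G.IsLoop e

/-- Degree of a vertex: loops count twice. -/
def deg (G : Multigraph) (v : G.V) : ℕ :=
  ∑ e : G.E, (if G.ends e = Sym2.diag v then 2 else if v ∈ G.ends e then 1 else 0)

/-- Adjacency via some edge. -/
def Adj (G : Multigraph) (u v : G.V) : Prop := ∃ e, G.ends e = s(u, v)

/-- Connectivity. -/
def Connected (G : Multigraph) : Prop := ∀ u v : G.V, Relation.ReflTransGen G.Adj u v

/-- A matching: a set of non-loop edges no two of which share an endpoint. -/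
def IsMatching (G : Multigraph) (M : Finset G.E) : Prop :=
  (∀ e ∈ M, ¬ G.IsLoop e) ∧
  ∀ e ∈ M, ∀ f ∈ M, e ≠ f → ∀ v : G.V, v ∈ G.ends e → v ∉ G.ends f

/-- A maximum matching. -/
def IsMaximumMatching (G : Multigraph) (M : Finset G.E) : Prop :=
  G.IsMatching M ∧ ∀ M' : Finset G.E, G.IsMatching M' → M'.card ≤ M.card

/-- `v` is saturated by `M`. -/
def Saturated (G : Multigraph) (M : Finset G.E) (v : G.V) : Prop :=
  ∃ e ∈ M, v ∈ G.ends e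

/-- Size of a maximum matching. -/
noncomputable def nu1 (G : Multigraph) : ℕ :=
  sSup {m | ∃ M : Finset G.E, G.IsMatching M ∧ M.card = m}

/-- Max number of edges coverable by two disjoint matchings. -/
noncomputable def nu2 (G : Multigraph) : ℕ :=
  sSup {m | ∃ H H' : Finset G.E, G.IsMatching H ∧ G.IsMatching H' ∧
    Disjoint H H' ∧ H.card + H'.card = m}

/-- Max number of edges coverable by three pairwise disjoint matchings. -/
noncomputable def nu3 (G : Multigraph) : ℕ :=
  sSup {m | ∃ H₁ H₂ H₃ : Finset G.E, G.IsMatching H₁ ∧ G.IsMatching H₂ ∧ G.IsMatching H₃ ∧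
    Disjoint H₁ H₂ ∧ Disjoint H₁ H₃ ∧ Disjoint H₂ H₃ ∧ H₁.card + H₂.card + H₃.card = m}

/-- Subdividing the edge `e`, with endpoints `u`, `v`, once: replace it by a path `u - w - v`
through a new vertex `w`. -/
def subdivideOnce (G : Multigraph) (e : G.E) (u v : G.V) : Multigraph where
  V := G.V ⊕ Unit
  E := {f : G.E // f ≠ e} ⊕ Bool
  fintypeV := inferInstance
  decEqV := inferInstance
  fintypeE := inferInstance
  decEqE := inferInstance
  ends := fun f =>
    match f with
    | Sum.inl ⟨f, _⟩ => (G.ends f).map Sum.inl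
    | Sum.inr true => s(Sum.inl u, Sum.inr ())
    | Sum.inr false => s(Sum.inl v, Sum.inr ())

/-- Subdividing every edge `e` exactly `k e` times, where `fst`/`snd` pick out the endpoints
of every edge. The edge `e` is replaced by the path
`fst e, (e,0), (e,1), …, (e, k e - 1), snd e` of length `k e + 1`. -/
def subdivide (G : Multigraph) (fst snd : G.E → G.V) (k : G.E → ℕ) : Multigraph where
  V := G.V ⊕ (Σ e : G.E, Fin (k e))
  E := Σ e : G.E, Fin (k e + 1)
  fintypeV := inferInstance
  decEqV := inferInstance
  fintypeE := inferInstance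
  decEqE := inferInstance
  ends := fun f =>
    s( if h : f.2.val = 0 then Sum.inl (fst f.1)
       else Sum.inr ⟨f.1, ⟨f.2.val - 1, by omega⟩⟩,
       if h : f.2.val = k f.1 then Sum.inl (snd f.1)
       else Sum.inr ⟨f.1, ⟨f.2.val, by have := f.2.isLt; omega⟩⟩ )


section Basics
variable {Γ : Multigraph}

lemma matching_unique {M : Finset Γ.E} (hM : Γ.IsMatching M) {d f : Γ.E}
    (hd : d ∈ M) (hf : f ∈ M) {z : Γ.V} (hzd : z ∈ Γ.ends d) (hzf : z ∈ Γ.ends f) : d = f := by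
  by_contra h
  exact hM.2 d hd f hf h z hzd hzf

lemma exists_other_of_not_diag {d : Γ.E} (hnl : ¬ (Γ.ends d).IsDiag) {z : Γ.V}
    (hz : z ∈ Γ.ends d) : ∃ y, y ≠ z ∧ Γ.ends d = s(z, y) := by
  obtain ⟨⟨a, b⟩, hab⟩ := Quot.exists_rep (Γ.ends d)
  have hab' : Γ.ends d = s(a, b) := hab.symm
  rw [hab'] at hz hnl
  rw [Sym2.mem_iff] at hz
  rw [Sym2.isDiag_iff_proj_eq] at hnl
  rcases hz with rfl | rfl
  · exact ⟨b, fun h => hnl h.symm, hab'⟩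
  · exact ⟨a, fun h => hnl h, by rw [hab', Sym2.eq_swap]⟩

lemma exists_other {M : Finset Γ.E} (hM : Γ.IsMatching M) {d : Γ.E} (hd : d ∈ M) {z : Γ.V}
    (hz : z ∈ Γ.ends d) : ∃ y, y ≠ z ∧ Γ.ends d = s(z, y) :=
  exists_other_of_not_diag (hM.1 d hd) hz

lemma empty_matching : Γ.IsMatching (∅ : Finset Γ.E) :=
  ⟨fun e he => absurd he (Finset.notMem_empty e), fun e he => absurd he (Finset.notMem_empty e)⟩

lemma matching_subset {M M' : Finset Γ.E} (h : M' ⊆ M) (hM : Γ.IsMatching M) :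
    Γ.IsMatching M' :=
  ⟨fun d hd => hM.1 d (h hd), fun d hd f hf => hM.2 d (h hd) f (h hf)⟩

/-- insert an edge into a matching whose endpoints are unsaturated -/
lemma matching_insert {M : Finset Γ.E} (hM : Γ.IsMatching M) {d : Γ.E} {a b : Γ.V}
    (hd : Γ.ends d = s(a, b)) (hab : a ≠ b) (ha : ¬ Γ.Saturated M a) (hb : ¬ Γ.Saturated M b) :
    Γ.IsMatching (insert d M) := by
  constructor
  · intro f hf
    rcases Finset.mem_insert.mp hf with rfl | hf
    · rw [IsLoop, hd, Sym2.isDiag_iff_proj_eq]; exact hab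
    · exact hM.1 f hf
  · intro f hf g hg hfg z hzf hzg
    rcases Finset.mem_insert.mp hf with rfl | hf <;> rcases Finset.mem_insert.mp hg with rfl | hg
    · exact hfg rfl
    · rw [hd, Sym2.mem_iff] at hzf
      rcases hzf with rfl | rfl
      · exact ha ⟨g, hg, hzg⟩
      · exact hb ⟨g, hg, hzg⟩
    · rw [hd, Sym2.mem_iff] at hzg
      rcases hzg with rfl | rfl
      · exact ha ⟨f, by assumption, hzf⟩
      · exact hb ⟨f, by assumption, hzf⟩
    · exact hM.2 f hf g hg hfg z hzf hzg


lemma incident_card_le_deg (z : Γ.V) :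
    (Finset.univ.filter fun d => z ∈ Γ.ends d).card ≤ Γ.deg z := by
  classical
  rw [deg, Finset.card_filter]
  refine le_trans (le_of_eq rfl) ?_
  refine le_trans (Finset.sum_le_sum (fun e _ => ?_)) le_rfl
  by_cases h1 : Γ.ends e = Sym2.diag z
  · have : z ∈ Γ.ends e := by rw [h1]; exact Sym2.mem_mk_left z z
    simp only [this, if_true]
    have : z ∈ Sym2.diag z := by rw [Sym2.diag]; exact Sym2.mem_mk_left z z
    simp [this, h1]
  · by_cases h2 : z ∈ Γ.ends e <;> simp [h1, h2]

lemma deg_eq_card (hl : Γ.Loopless) (z : Γ.V) :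
    Γ.deg z = (Finset.univ.filter fun d => z ∈ Γ.ends d).card := by
  classical
  rw [deg, Finset.card_filter]
  refine Finset.sum_congr rfl (fun e _ => ?_)
  have : ¬ Γ.ends e = Sym2.diag z := by
    intro h
    exact hl e (by rw [IsLoop, h]; exact Sym2.diag_isDiag z)
  simp [this]

/-- three distinct edges at one vertex give degree ≥ 3. -/
lemma three_edges_deg {z : Γ.V} {d1 d2 d3 : Γ.E} (h12 : d1 ≠ d2) (h13 : d1 ≠ d3) (h23 : d2 ≠ d3)
    (hz1 : z ∈ Γ.ends d1) (hz2 : z ∈ Γ.ends d2) (hz3 : z ∈ Γ.ends d3) : 3 ≤ Γ.deg z := by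
  classical
  refine le_trans ?_ (incident_card_le_deg z)
  have hsub : ({d1, d2, d3} : Finset Γ.E) ⊆ Finset.univ.filter fun d => z ∈ Γ.ends d := by
    intro x hx
    simp only [Finset.mem_insert, Finset.mem_singleton] at hx
    rcases hx with rfl | rfl | rfl <;> simp [hz1, hz2, hz3]
  refine le_trans (le_of_eq ?_) (Finset.card_le_card hsub)
  rw [Finset.card_insert_of_notMem (by simp [h12, h13]),
    Finset.card_insert_of_notMem (by simp [h23]), Finset.card_singleton]

end Basics

section Walk
variable {Γ : Multigraph} {A B : Finset Γ.E} {x₀ : Γ.V}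

/-- An alternating walk: edges `cs 0, …, cs (k-1)`, vertices `xs 0, …, xs k`,
even-indexed edges in `B`, odd-indexed in `A`. -/
def WalkProp (Γ : Multigraph) (A B : Finset Γ.E) (x₀ : Γ.V) (k : ℕ) (xs : ℕ → Γ.V)
    (cs : ℕ → Γ.E) : Prop :=
  xs 0 = x₀ ∧
  (∀ i j, i ≤ k → j ≤ k → xs i = xs j → i = j) ∧
  (∀ i < k, Γ.ends (cs i) = s(xs i, xs (i+1))) ∧
  (∀ i < k, i % 2 = 0 → cs i ∈ B) ∧
  (∀ i < k, i % 2 = 1 → cs i ∈ A)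

lemma left_mem_ends {a b : Γ.V} {d : Γ.E} (h : Γ.ends d = s(a, b)) : a ∈ Γ.ends d := by
  rw [h]; exact Sym2.mem_mk_left a b

lemma right_mem_ends {a b : Γ.V} {d : Γ.E} (h : Γ.ends d = s(a, b)) : b ∈ Γ.ends d := by
  rw [h]; exact Sym2.mem_mk_right a b

lemma no_revisit (hA : Γ.IsMatching A) (hB : Γ.IsMatching B) (hAB : Disjoint A B)
    {k : ℕ} {xs : ℕ → Γ.V} {cs : ℕ → Γ.E} (hw : Γ.WalkProp A B x₀ k xs cs)
    (hx₀ : ¬ Γ.Saturated A x₀) {d : Γ.E} {x' : Γ.V}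
    (hd : (k % 2 = 0 → d ∈ B) ∧ (k % 2 = 1 → d ∈ A))
    (hde : Γ.ends d = s(xs k, x')) (hx' : x' ≠ xs k) :
    ∀ j, j ≤ k → xs j ≠ x' := by
  obtain ⟨hhead, hinj, hends, hcolB, hcolA⟩ := hw
  intro j hj heq
  have hjk : j ≠ k := by
    rintro rfl
    exact hx' heq.symm
  have hjk' : j < k := lt_of_le_of_ne hj hjk
  have hxd : xs j ∈ Γ.ends d := heq ▸ right_mem_ends hde
  rcases Nat.mod_two_eq_zero_or_one k with hk | hk
  · -- k even, d ∈ B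
    have hdB : d ∈ B := hd.1 hk
    set i₀ := if j % 2 = 0 then j else j - 1 with hi₀
    have hi₀k : i₀ < k := by unfold i₀; split <;> omega
    have hi₀e : i₀ % 2 = 0 := by unfold i₀; split <;> omega
    have hc : cs i₀ ∈ B := hcolB i₀ hi₀k hi₀e
    have hxc : xs j ∈ Γ.ends (cs i₀) := by
      unfold i₀
      split
      · exact left_mem_ends (hends j hjk')
      · have hj1 : j - 1 + 1 = j := by omega
        have := right_mem_ends (hends (j-1) (by omega))
        rwa [hj1] at this
    have hdc : d = cs i₀ := matching_unique hB hdB hc hxd hxc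
    have h2 : s(xs k, x') = s(xs i₀, xs (i₀ + 1)) := by
      rw [← hde, hdc]; exact hends i₀ hi₀k
    rw [Sym2.eq_iff] at h2
    rcases h2 with ⟨h3, _⟩ | ⟨h4, _⟩
    · have := hinj k i₀ le_rfl (le_of_lt hi₀k) h3
      omega
    · have := hinj k (i₀+1) le_rfl (by omega) h4
      omega
  · -- k odd, d ∈ A
    have hdA : d ∈ A := hd.2 hk
    rcases Nat.eq_zero_or_pos j with rfl | hjpos
    · exact hx₀ ⟨d, hdA, hhead ▸ hxd⟩
    set i₀ := if j % 2 = 1 then j else j - 1 with hi₀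
    have hi₀k : i₀ < k := by unfold i₀; split <;> omega
    have hi₀e : i₀ % 2 = 1 := by unfold i₀; split <;> omega
    have hc : cs i₀ ∈ A := hcolA i₀ hi₀k hi₀e
    have hxc : xs j ∈ Γ.ends (cs i₀) := by
      unfold i₀
      split
      · exact left_mem_ends (hends j hjk')
      · have hj1 : j - 1 + 1 = j := by omega
        have := right_mem_ends (hends (j-1) (by omega))
        rwa [hj1] at this
    have hdc : d = cs i₀ := matching_unique hA hdA hc hxd hxc
    have h2 : s(xs k, x') = s(xs i₀, xs (i₀ + 1)) := by
      rw [← hde, hdc]; exact hends i₀ hi₀k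
    rw [Sym2.eq_iff] at h2
    rcases h2 with ⟨h3, _⟩ | ⟨h4, _⟩
    · have := hinj k i₀ le_rfl (le_of_lt hi₀k) h3
      omega
    · have := hinj k (i₀+1) le_rfl (by omega) h4
      omega

lemma walk_extend (hA : Γ.IsMatching A) (hB : Γ.IsMatching B) (hAB : Disjoint A B)
    {k : ℕ} {xs : ℕ → Γ.V} {cs : ℕ → Γ.E} (hw : Γ.WalkProp A B x₀ k xs cs)
    (hx₀ : ¬ Γ.Saturated A x₀)
    (hsat : (k % 2 = 0 ∧ Γ.Saturated B (xs k)) ∨ (k % 2 = 1 ∧ Γ.Saturated A (xs k))) :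
    ∃ xs' cs', Γ.WalkProp A B x₀ (k+1) xs' cs' := by
  obtain ⟨d, hdM, hxsk⟩ : ∃ d, ((k % 2 = 0 → d ∈ B) ∧ (k % 2 = 1 → d ∈ A)) ∧ xs k ∈ Γ.ends d := by
    rcases hsat with ⟨hk, d, hdB, hd⟩ | ⟨hk, d, hdA, hd⟩
    · exact ⟨d, ⟨fun _ => hdB, fun h => by omega⟩, hd⟩
    · exact ⟨d, ⟨fun h => by omega, fun _ => hdA⟩, hd⟩
  have hnl : ¬ (Γ.ends d).IsDiag := by
    rcases Nat.mod_two_eq_zero_or_one k with hk | hk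
    · exact hB.1 d (hdM.1 hk)
    · exact hA.1 d (hdM.2 hk)
  obtain ⟨x', hx', hde⟩ := exists_other_of_not_diag hnl hxsk
  have hnew : ∀ j, j ≤ k → xs j ≠ x' := no_revisit hA hB hAB hw hx₀ hdM hde hx'
  obtain ⟨hhead, hinj, hends, hcolB, hcolA⟩ := hw
  refine ⟨Function.update xs (k+1) x', Function.update cs k d, ?_, ?_, ?_, ?_, ?_⟩
  · rw [Function.update_of_ne (by omega : (0:ℕ) ≠ k+1)]
    exact hhead
  · intro i j hi hj hij
    by_cases h1 : i = k + 1 <;> by_cases h2 : j = k + 1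
    · omega
    · exfalso
      rw [h1, Function.update_self, Function.update_of_ne h2] at hij
      exact hnew j (by omega) hij.symm
    · exfalso
      rw [h2, Function.update_self, Function.update_of_ne h1] at hij
      exact hnew i (by omega) hij
    · rw [Function.update_of_ne h1, Function.update_of_ne h2] at hij
      exact hinj i j (by omega) (by omega) hij
  · intro i hi
    by_cases h1 : i = k
    · rw [h1, Function.update_self, Function.update_of_ne (by omega : k ≠ k+1),
        Function.update_self]
      exact hde
    · rw [Function.update_of_ne h1, Function.update_of_ne (by omega : i ≠ k+1),
        Function.update_of_ne (by omega : i+1 ≠ k+1)]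
      exact hends i (by omega)
  · intro i hi hpar
    by_cases h1 : i = k
    · rw [h1, Function.update_self]
      exact hdM.1 (h1 ▸ hpar)
    · rw [Function.update_of_ne h1]
      exact hcolB i (by omega) hpar
  · intro i hi hpar
    by_cases h1 : i = k
    · rw [h1, Function.update_self]
      exact hdM.2 (h1 ▸ hpar)
    · rw [Function.update_of_ne h1]
      exact hcolA i (by omega) hpar

lemma exists_max_walk (hne : Nonempty Γ.E) (hA : Γ.IsMatching A) (hB : Γ.IsMatching B)
    (hAB : Disjoint A B) (hx₀ : ¬ Γ.Saturated A x₀) :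
    ∃ (k : ℕ) (xs : ℕ → Γ.V) (cs : ℕ → Γ.E), Γ.WalkProp A B x₀ k xs cs ∧
      (k % 2 = 0 → ¬ Γ.Saturated B (xs k)) ∧ (k % 2 = 1 → ¬ Γ.Saturated A (xs k)) := by
  classical
  have main : ∀ (n k : ℕ) (xs : ℕ → Γ.V) (cs : ℕ → Γ.E),
      Fintype.card Γ.V ≤ k + n → Γ.WalkProp A B x₀ k xs cs →
      ∃ (k : ℕ) (xs : ℕ → Γ.V) (cs : ℕ → Γ.E), Γ.WalkProp A B x₀ k xs cs ∧
        (k % 2 = 0 → ¬ Γ.Saturated B (xs k)) ∧ (k % 2 = 1 → ¬ Γ.Saturated A (xs k)) := by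
    intro n
    induction n with
    | zero =>
      intro k xs cs hcard hw
      exfalso
      have : (Finset.range (k+1)).card ≤ (Finset.univ : Finset Γ.V).card := by
        apply Finset.card_le_card_of_injOn (fun i => xs i) (fun i _ => Finset.mem_univ _)
        intro i hi j hj hij
        exact hw.2.1 i j (by simp at hi; omega) (by simp at hj; omega) hij
      simp [Finset.card_range, Finset.card_univ] at this
      omega
    | succ n ih =>
      intro k xs cs hcard hw
      by_cases hterm : (k % 2 = 0 → ¬ Γ.Saturated B (xs k)) ∧ (k % 2 = 1 → ¬ Γ.Saturated A (xs k))
      · exact ⟨k, xs, cs, hw, hterm.1, hterm.2⟩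
      · have hsat : (k % 2 = 0 ∧ Γ.Saturated B (xs k)) ∨ (k % 2 = 1 ∧ Γ.Saturated A (xs k)) := by
          rcases Nat.mod_two_eq_zero_or_one k with hk | hk
          · left
            refine ⟨hk, by_contra fun h => hterm ⟨fun _ => h, fun h' => by omega⟩⟩
          · right
            refine ⟨hk, by_contra fun h => hterm ⟨fun h' => by omega, fun _ => h⟩⟩
        obtain ⟨xs', cs', hw'⟩ := walk_extend hA hB hAB hw hx₀ hsat
        exact ih (k+1) xs' cs' (by omega) hw'
  refine main (Fintype.card Γ.V) 0 (fun _ => x₀) (fun _ => hne.some) (by omega) ?_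
  exact ⟨rfl, fun i j hi hj _ => by omega, fun i hi => by omega, fun i hi => by omega,
    fun i hi => by omega⟩

end Walk

section Flip
variable {Γ : Multigraph} {A B : Finset Γ.E} {x₀ : Γ.V}

lemma flip_lemma (hA : Γ.IsMatching A) (hB : Γ.IsMatching B) (hAB : Disjoint A B)
    (hx₀ : ¬ Γ.Saturated A x₀) {k : ℕ} {xs : ℕ → Γ.V} {cs : ℕ → Γ.E}
    (hw : Γ.WalkProp A B x₀ k xs cs)
    (tB : k % 2 = 0 → ¬ Γ.Saturated B (xs k)) (tA : k % 2 = 1 → ¬ Γ.Saturated A (xs k)) :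
    ∃ A2 B2 : Finset Γ.E, Γ.IsMatching A2 ∧ Γ.IsMatching B2 ∧ Disjoint A2 B2 ∧ A2 ∪ B2 = A ∪ B ∧
      ¬ Γ.Saturated B2 x₀ ∧
      (∀ z : Γ.V, (∀ j, j ≤ k → xs j ≠ z) →
        (Γ.Saturated A2 z → Γ.Saturated A z) ∧ (Γ.Saturated B2 z → Γ.Saturated B z)) := by
  classical
  obtain ⟨hhead, hinj, hends, hcolB, hcolA⟩ := hw
  set S : Finset Γ.E := (Finset.range k).image cs with hS
  have memS : ∀ c ∈ S, ∃ i, i < k ∧ cs i = c := by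
    intro c hc
    obtain ⟨i, hi, hic⟩ := Finset.mem_image.mp hc
    exact ⟨i, Finset.mem_range.mp hi, hic⟩
  have memS' : ∀ i, i < k → cs i ∈ S := by
    intro i hi
    exact Finset.mem_image.mpr ⟨i, Finset.mem_range.mpr hi, rfl⟩
  have F2 : ∀ c ∈ S, ∀ z ∈ Γ.ends c, ∃ j, j ≤ k ∧ xs j = z := by
    intro c hc z hz
    obtain ⟨i, hi, rfl⟩ := memS c hc
    rw [hends i hi, Sym2.mem_iff] at hz
    rcases hz with rfl | rfl
    · exact ⟨i, by omega, rfl⟩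
    · exact ⟨i+1, by omega, rfl⟩
  have F3 : ∀ j, j ≤ k → ∀ d ∈ A, xs j ∈ Γ.ends d → d ∈ S := by
    intro j hj d hdA hxd
    rcases Nat.eq_zero_or_pos j with rfl | hjpos
    · exact absurd ⟨d, hdA, hhead ▸ hxd⟩ hx₀
    by_cases hj2 : j % 2 = 1
    · have hjk2 : j < k := by
        rcases eq_or_lt_of_le hj with rfl | h
        · exact absurd ⟨d, hdA, hxd⟩ (tA hj2)
        · exact h
      have hde := matching_unique hA hdA (hcolA j hjk2 hj2) hxd (left_mem_ends (hends j hjk2))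
      rw [hde]
      exact memS' j hjk2
    · have h1 : (j-1) % 2 = 1 := by omega
      have h2 : j - 1 < k := by omega
      have hxc : xs j ∈ Γ.ends (cs (j-1)) := by
        have := right_mem_ends (hends (j-1) h2)
        rwa [show j - 1 + 1 = j by omega] at this
      have hde := matching_unique hA hdA (hcolA (j-1) h2 h1) hxd hxc
      rw [hde]
      exact memS' (j-1) h2
  have F4 : ∀ j, j ≤ k → ∀ d ∈ B, xs j ∈ Γ.ends d → d ∈ S := by
    intro j hj d hdB hxd
    by_cases hj2 : j % 2 = 0
    · have hjk2 : j < k := by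
        rcases eq_or_lt_of_le hj with rfl | h
        · exact absurd ⟨d, hdB, hxd⟩ (tB hj2)
        · exact h
      have hde := matching_unique hB hdB (hcolB j hjk2 hj2) hxd (left_mem_ends (hends j hjk2))
      rw [hde]
      exact memS' j hjk2
    · have h1 : (j-1) % 2 = 0 := by omega
      have h2 : j - 1 < k := by omega
      have hxc : xs j ∈ Γ.ends (cs (j-1)) := by
        have := right_mem_ends (hends (j-1) h2)
        rwa [show j - 1 + 1 = j by omega] at this
      have hde := matching_unique hB hdB (hcolB (j-1) h2 h1) hxd hxc
      rw [hde]
      exact memS' (j-1) h2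
  refine ⟨(A \ S) ∪ (S ∩ B), (B \ S) ∪ (S ∩ A), ?_, ?_, ?_, ?_, ?_, ?_⟩
  · constructor
    · intro f hf
      rcases Finset.mem_union.mp hf with hf | hf
      · exact hA.1 f (Finset.mem_sdiff.mp hf).1
      · exact hB.1 f (Finset.mem_inter.mp hf).2
    · intro f hf g hg hfg z hzf hzg
      rcases Finset.mem_union.mp hf with hf | hf <;> rcases Finset.mem_union.mp hg with hg | hg
      · exact hA.2 f (Finset.mem_sdiff.mp hf).1 g (Finset.mem_sdiff.mp hg).1 hfg z hzf hzg
      · obtain ⟨j, hj, hjz⟩ := F2 g (Finset.mem_inter.mp hg).1 z hzg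
        exact (Finset.mem_sdiff.mp hf).2 (F3 j hj f (Finset.mem_sdiff.mp hf).1 (hjz ▸ hzf))
      · obtain ⟨j, hj, hjz⟩ := F2 f (Finset.mem_inter.mp hf).1 z hzf
        exact (Finset.mem_sdiff.mp hg).2 (F3 j hj g (Finset.mem_sdiff.mp hg).1 (hjz ▸ hzg))
      · exact hB.2 f (Finset.mem_inter.mp hf).2 g (Finset.mem_inter.mp hg).2 hfg z hzf hzg
  · constructor
    · intro f hf
      rcases Finset.mem_union.mp hf with hf | hf
      · exact hB.1 f (Finset.mem_sdiff.mp hf).1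
      · exact hA.1 f (Finset.mem_inter.mp hf).2
    · intro f hf g hg hfg z hzf hzg
      rcases Finset.mem_union.mp hf with hf | hf <;> rcases Finset.mem_union.mp hg with hg | hg
      · exact hB.2 f (Finset.mem_sdiff.mp hf).1 g (Finset.mem_sdiff.mp hg).1 hfg z hzf hzg
      · obtain ⟨j, hj, hjz⟩ := F2 g (Finset.mem_inter.mp hg).1 z hzg
        exact (Finset.mem_sdiff.mp hf).2 (F4 j hj f (Finset.mem_sdiff.mp hf).1 (hjz ▸ hzf))
      · obtain ⟨j, hj, hjz⟩ := F2 f (Finset.mem_inter.mp hf).1 z hzf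
        exact (Finset.mem_sdiff.mp hg).2 (F4 j hj g (Finset.mem_sdiff.mp hg).1 (hjz ▸ hzg))
      · exact hA.2 f (Finset.mem_inter.mp hf).2 g (Finset.mem_inter.mp hg).2 hfg z hzf hzg
  · rw [Finset.disjoint_left]
    intro d hd hd'
    rcases Finset.mem_union.mp hd with hd | hd <;> rcases Finset.mem_union.mp hd' with hd' | hd'
    · exact Finset.disjoint_left.mp hAB (Finset.mem_sdiff.mp hd).1 (Finset.mem_sdiff.mp hd').1
    · exact (Finset.mem_sdiff.mp hd).2 (Finset.mem_inter.mp hd').1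
    · exact (Finset.mem_sdiff.mp hd').2 (Finset.mem_inter.mp hd).1
    · exact Finset.disjoint_left.mp hAB (Finset.mem_inter.mp hd').2 (Finset.mem_inter.mp hd).2
  · ext d
    simp only [Finset.mem_union, Finset.mem_sdiff, Finset.mem_inter]
    constructor
    · rintro ((⟨h, _⟩ | ⟨_, h⟩) | (⟨h, _⟩ | ⟨_, h⟩)) <;> tauto
    · intro h
      by_cases hdS : d ∈ S <;> tauto
  · rintro ⟨d, hd, hxd⟩
    rcases Finset.mem_union.mp hd with hd | hd
    · have := F4 0 (by omega) d (Finset.mem_sdiff.mp hd).1 (hhead ▸ hxd)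
      exact (Finset.mem_sdiff.mp hd).2 this
    · exact hx₀ ⟨d, (Finset.mem_inter.mp hd).2, hxd⟩
  · intro z hz
    constructor
    · rintro ⟨d, hd, hxd⟩
      rcases Finset.mem_union.mp hd with hd | hd
      · exact ⟨d, (Finset.mem_sdiff.mp hd).1, hxd⟩
      · obtain ⟨j, hj, hjz⟩ := F2 d (Finset.mem_inter.mp hd).1 z hxd
        exact absurd hjz (hz j hj)
    · rintro ⟨d, hd, hxd⟩
      rcases Finset.mem_union.mp hd with hd | hd
      · exact ⟨d, (Finset.mem_sdiff.mp hd).1, hxd⟩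
      · obtain ⟨j, hj, hjz⟩ := F2 d (Finset.mem_inter.mp hd).1 z hxd
        exact absurd hjz (hz j hj)

end Flip

attribute [reducible] subdivideOnce

section Sub
variable {G : Multigraph} {e : G.E} {u v : G.V}

/-- Lift a finset of edges of `G` (minus `e`) into the subdivision. -/
def liftEdges (G : Multigraph) (e : G.E) (u v : G.V) (M : Finset G.E) :
    Finset (G.subdivideOnce e u v).E :=
  (M.erase e).attach.image
    (fun x => Sum.inl ⟨x.1, Finset.ne_of_mem_erase x.2⟩)

lemma mem_liftEdges {M : Finset G.E} {d : (G.subdivideOnce e u v).E} :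
    d ∈ liftEdges G e u v M ↔ ∃ (f : G.E) (hf : f ≠ e), f ∈ M ∧ d = Sum.inl ⟨f, hf⟩ := by
  constructor
  · intro hd
    obtain ⟨⟨f, hf⟩, _, rfl⟩ := Finset.mem_image.mp hd
    exact ⟨f, Finset.ne_of_mem_erase hf, Finset.mem_of_mem_erase hf, rfl⟩
  · rintro ⟨f, hf, hfM, rfl⟩
    exact Finset.mem_image.mpr ⟨⟨f, Finset.mem_erase.mpr ⟨hf, hfM⟩⟩, Finset.mem_attach _ _, rfl⟩

lemma inl_mem_liftEdges {M : Finset G.E} {f : G.E} {hf : f ≠ e} :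
    (Sum.inl ⟨f, hf⟩ : (G.subdivideOnce e u v).E) ∈ liftEdges G e u v M ↔ f ∈ M := by
  rw [mem_liftEdges]
  constructor
  · rintro ⟨f', hf', hfM, hEq⟩
    have : f = f' := congrArg (fun x => match x with | Sum.inl p => p.1 | Sum.inr _ => e) hEq
    exact this ▸ hfM
  · intro h
    exact ⟨f, hf, h, rfl⟩

lemma ends_inl {f : G.E} {hf : f ≠ e} :
    (G.subdivideOnce e u v).ends (Sum.inl ⟨f, hf⟩) = (G.ends f).map Sum.inl := rfl

lemma ends_eps1 : (G.subdivideOnce e u v).ends (Sum.inr true) = s(Sum.inl u, Sum.inr ()) := rfl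
lemma ends_eps2 : (G.subdivideOnce e u v).ends (Sum.inr false) = s(Sum.inl v, Sum.inr ()) := rfl

lemma card_liftEdges {M : Finset G.E} : (liftEdges G e u v M).card = (M.erase e).card := by
  rw [liftEdges, Finset.card_image_of_injective _ (fun a b hab => by
    apply Subtype.ext
    exact congrArg (fun x => match x with | Sum.inl p => p.1 | Sum.inr _ => e) hab),
    Finset.card_attach]

lemma sat_liftEdges {M : Finset G.E} {z : G.V} :
    (G.subdivideOnce e u v).Saturated (liftEdges G e u v M) (Sum.inl z) ↔
      G.Saturated (M.erase e) z := by
  constructor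
  · rintro ⟨d, hd, hzd⟩
    obtain ⟨f, hf, hfM, rfl⟩ := mem_liftEdges.mp hd
    rw [ends_inl, Sym2.mem_map] at hzd
    obtain ⟨a, ha, haz⟩ := hzd
    refine ⟨f, Finset.mem_erase.mpr ⟨hf, hfM⟩, ?_⟩
    rwa [← Sum.inl_injective haz]
  · rintro ⟨f, hf, hzf⟩
    refine ⟨Sum.inl ⟨f, (Finset.mem_erase.mp hf).1⟩,
      mem_liftEdges.mpr ⟨f, (Finset.mem_erase.mp hf).1, (Finset.mem_erase.mp hf).2, rfl⟩, ?_⟩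
    rw [ends_inl, Sym2.mem_map]
    exact ⟨z, hzf, rfl⟩

lemma not_sat_liftEdges_inr {M : Finset G.E} :
    ¬ (G.subdivideOnce e u v).Saturated (liftEdges G e u v M) (Sum.inr ()) := by
  rintro ⟨d, hd, hzd⟩
  obtain ⟨f, hf, hfM, rfl⟩ := mem_liftEdges.mp hd
  rw [ends_inl, Sym2.mem_map] at hzd
  obtain ⟨a, _, haz⟩ := hzd
  exact nomatch haz

lemma matching_liftEdges {M : Finset G.E} (hM : G.IsMatching M) :
    (G.subdivideOnce e u v).IsMatching (liftEdges G e u v M) := by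
  constructor
  · intro d hd
    obtain ⟨f, hf, hfM, rfl⟩ := mem_liftEdges.mp hd
    intro hdiag
    rw [IsLoop, ends_inl, Sym2.isDiag_map Sum.inl_injective] at hdiag
    exact hM.1 f hfM hdiag
  · intro d hd d' hd' hdd' z hzd hzd'
    obtain ⟨f, hf, hfM, rfl⟩ := mem_liftEdges.mp hd
    obtain ⟨f', hf', hfM', rfl⟩ := mem_liftEdges.mp hd'
    rw [ends_inl, Sym2.mem_map] at hzd hzd'
    obtain ⟨a, ha, rfl⟩ := hzd
    obtain ⟨a', ha', haz⟩ := hzd'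
    have haa : a' = a := Sum.inl_injective haz
    rw [haa] at ha'
    have hff' : f ≠ f' := by
      intro h
      apply hdd'
      subst h
      rfl
    exact hM.2 f hfM f' hfM' hff' a ha ha'

lemma disjoint_liftEdges {M N : Finset G.E} (h : Disjoint M N) :
    Disjoint (liftEdges G e u v M) (liftEdges G e u v N) := by
  rw [Finset.disjoint_left]
  intro d hd hd'
  obtain ⟨f, hf, hfM, rfl⟩ := mem_liftEdges.mp hd
  obtain ⟨f', hf', hfN, hEq⟩ := mem_liftEdges.mp hd'
  have : f = f' := congrArg (fun x => match x with | Sum.inl p => p.1 | Sum.inr _ => e) hEq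
  exact Finset.disjoint_left.mp h hfM (this ▸ hfN)

lemma inr_not_mem_liftEdges {M : Finset G.E} (b : Bool) :
    (Sum.inr b : (G.subdivideOnce e u v).E) ∉ liftEdges G e u v M := by
  intro h
  obtain ⟨f, hf, _, hEq⟩ := mem_liftEdges.mp h
  exact nomatch hEq

end Sub

section Nu
variable {G : Multigraph}

lemma nu2_bddAbove (G : Multigraph) :
    BddAbove {m | ∃ H H' : Finset G.E, G.IsMatching H ∧ G.IsMatching H' ∧
      Disjoint H H' ∧ H.card + H'.card = m} := by
  refine ⟨2 * Fintype.card G.E, ?_⟩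
  rintro m ⟨H, H', _, _, _, rfl⟩
  have h1 := Finset.card_le_univ H
  have h2 := Finset.card_le_univ H'
  omega

lemma pair_le_nu2 {H H' : Finset G.E} (hH : G.IsMatching H) (hH' : G.IsMatching H')
    (hd : Disjoint H H') : H.card + H'.card ≤ G.nu2 :=
  le_csSup (nu2_bddAbove G) ⟨H, H', hH, hH', hd, rfl⟩

lemma nu2_achieved (G : Multigraph) : ∃ H H' : Finset G.E, G.IsMatching H ∧ G.IsMatching H' ∧
    Disjoint H H' ∧ H.card + H'.card = G.nu2 := by
  have h0 : (0 : ℕ) ∈ {m | ∃ H H' : Finset G.E, G.IsMatching H ∧ G.IsMatching H' ∧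
      Disjoint H H' ∧ H.card + H'.card = m} :=
    ⟨∅, ∅, empty_matching, empty_matching, Finset.disjoint_empty_left _, by simp⟩
  have := Nat.sSup_mem ⟨0, h0⟩ (nu2_bddAbove G)
  exact this

end Nu

section Case2
variable {G : Multigraph}

lemma inr_not_mem_union_lift {e : G.E} {u v : G.V} {M N : Finset G.E} (b : Bool) :
    (Sum.inr b : (G.subdivideOnce e u v).E) ∉ liftEdges G e u v M ∪ liftEdges G e u v N := by
  intro h
  rcases Finset.mem_union.mp h with h | h <;> exact inr_not_mem_liftEdges b h

lemma case2' (G : Multigraph) (hloopless : G.Loopless) (hconn : G.Connected)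
    (hδ : ∀ z : G.V, 2 ≤ G.deg z)
    (hnotEvenCycle : ¬ ((∀ z : G.V, G.deg z = 2) ∧ Even (Fintype.card G.E)))
    (hedge : ∀ f : G.E, ∀ a b : G.V, G.ends f = s(a, b) → ¬ (3 ≤ G.deg a ∧ 3 ≤ G.deg b))
    (e : G.E) (u v : G.V) (he : G.ends e = s(u, v)) (huv : u ≠ v)
    (H H' : Finset G.E) (hH : G.IsMatching H) (hH' : G.IsMatching H')
    (hdisj : Disjoint H H') (heH : e ∈ H) :
    ∃ K K' : Finset (G.subdivideOnce e u v).E, (G.subdivideOnce e u v).IsMatching K ∧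
      (G.subdivideOnce e u v).IsMatching K' ∧ Disjoint K K' ∧
      K.card + K'.card = H.card + H'.card + 1 := by
  classical
  have heH' : e ∉ H' := fun h => Finset.disjoint_left.mp hdisj heH h
  set A : Finset (G.subdivideOnce e u v).E := liftEdges G e u v H with hAdef
  set B : Finset (G.subdivideOnce e u v).E := liftEdges G e u v H' with hBdef
  have hA : (G.subdivideOnce e u v).IsMatching A := matching_liftEdges hH
  have hB : (G.subdivideOnce e u v).IsMatching B := matching_liftEdges hH'
  have hAB : Disjoint A B := disjoint_liftEdges hdisj
  have hne : Nonempty (G.subdivideOnce e u v).E := ⟨Sum.inr true⟩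
  have hsatA : ∀ z : G.V, z ∈ G.ends e → ¬ (G.subdivideOnce e u v).Saturated A (Sum.inl z) := by
    intro z hz hsat
    rw [hAdef, sat_liftEdges] at hsat
    obtain ⟨f, hf, hzf⟩ := hsat
    exact (Finset.mem_erase.mp hf).1
      (matching_unique hH (Finset.mem_of_mem_erase hf) heH hzf hz)
  have hx₀ : ¬ (G.subdivideOnce e u v).Saturated A (Sum.inl v) := hsatA v (right_mem_ends he)
  have huA : ¬ (G.subdivideOnce e u v).Saturated A (Sum.inl u) := hsatA u (left_mem_ends he)
  obtain ⟨k, xs, cs, hw, tB, tA⟩ := exists_max_walk hne hA hB hAB hx₀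
  have hhead := hw.1
  have hinj := hw.2.1
  have hends := hw.2.2.1
  have hcolB := hw.2.2.2.1
  have hcolA := hw.2.2.2.2
  have csinl : ∀ i, i < k → ∃ (f : G.E) (hf : f ≠ e), cs i = Sum.inl ⟨f, hf⟩ ∧
      (i % 2 = 0 → f ∈ H') ∧ (i % 2 = 1 → f ∈ H) := by
    intro i hi
    rcases Nat.mod_two_eq_zero_or_one i with hp | hp
    · obtain ⟨f, hf, hfM, hEq⟩ := mem_liftEdges.mp (hcolB i hi hp)
      exact ⟨f, hf, hEq, fun _ => hfM, fun h => by omega⟩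
    · obtain ⟨f, hf, hfM, hEq⟩ := mem_liftEdges.mp (hcolA i hi hp)
      exact ⟨f, hf, hEq, fun h => by omega, fun _ => hfM⟩
  have xinl : ∀ j, j ≤ k → ∃ z : G.V, xs j = Sum.inl z := by
    intro j hj
    rcases Nat.eq_zero_or_pos j with rfl | hjpos
    · exact ⟨v, hhead⟩
    · obtain ⟨f, hf, hEq, _, _⟩ := csinl (j-1) (by omega)
      have hx : xs j ∈ (G.subdivideOnce e u v).ends (cs (j-1)) := by
        have := right_mem_ends (hends (j-1) (by omega))
        rwa [show j - 1 + 1 = j by omega] at this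
      rw [hEq, ends_inl, Sym2.mem_map] at hx
      obtain ⟨a, _, haz⟩ := hx
      exact ⟨a, haz.symm⟩
  rcases Classical.em (∃ j, j ≤ k ∧ xs j = (Sum.inl u : (G.subdivideOnce e u v).V)) with
    hucase | hucase
  · -- the cycle case
    obtain ⟨ju, hju, hju'⟩ := hucase
    have hju0 : ju ≠ 0 := by
      rintro rfl
      rw [hhead] at hju'
      exact huv (Sum.inl_injective hju').symm
    have hjuk : ju = k := by
      by_contra hne'
      have hjlt : ju < k := lt_of_le_of_ne hju hne'
      rcases Nat.mod_two_eq_zero_or_one ju with hp | hp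
      · refine huA ⟨cs (ju-1), hcolA (ju-1) (by omega) (by omega), ?_⟩
        have := right_mem_ends (hends (ju-1) (by omega))
        rwa [show ju-1+1=ju by omega, hju'] at this
      · refine huA ⟨cs ju, hcolA ju hjlt hp, ?_⟩
        have := left_mem_ends (hends ju hjlt)
        rwa [hju'] at this
    have hxk : xs k = Sum.inl u := hjuk ▸ hju'
    have hk1 : 1 ≤ k := by omega
    have hkodd : k % 2 = 1 := by
      rcases Nat.mod_two_eq_zero_or_one k with hp | hp
      · exfalso
        refine huA ⟨cs (k-1), hcolA (k-1) (by omega) (by omega), ?_⟩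
        have := right_mem_ends (hends (k-1) (by omega))
        rwa [show k-1+1=k by omega, hxk] at this
      · exact hp
    -- G-level cycle data
    have csdata : ∀ i, ∃ f : G.E, i < k → (f ≠ e ∧
        (G.subdivideOnce e u v).ends (cs i) = (G.ends f).map Sum.inl ∧
        (i % 2 = 0 → f ∈ H') ∧ (i % 2 = 1 → f ∈ H) ∧
        (∀ X : Finset G.E, cs i ∈ liftEdges G e u v X ↔ f ∈ X)) := by
      intro i
      by_cases hi : i < k
      · obtain ⟨f, hf, hEq, h0, h1⟩ := csinl i hi
        exact ⟨f, fun _ => ⟨hf, by rw [hEq, ends_inl], h0, h1,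
          fun X => by rw [hEq, inl_mem_liftEdges]⟩⟩
      · exact ⟨e, fun h => absurd h hi⟩
    choose γ hγ using csdata
    have zdata : ∀ j, ∃ z : G.V, j ≤ k → xs j = Sum.inl z := by
      intro j
      by_cases hj : j ≤ k
      · obtain ⟨z, hz⟩ := xinl j hj
        exact ⟨z, fun _ => hz⟩
      · exact ⟨v, fun h => absurd h hj⟩
    choose zf hzf using zdata
    have hz0 : zf 0 = v := Sum.inl_injective ((hzf 0 (by omega)).symm.trans hhead)
    have hzk : zf k = u := Sum.inl_injective ((hzf k le_rfl).symm.trans hxk)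
    have hzinj : ∀ i j, i ≤ k → j ≤ k → zf i = zf j → i = j := by
      intro i j hi hj hij
      exact hinj i j hi hj (by rw [hzf i hi, hzf j hj, hij])
    have hgends : ∀ i, i < k → G.ends (γ i) = s(zf i, zf (i+1)) := by
      intro i hi
      apply Sym2.map.injective (Sum.inl_injective (β := Unit))
      rw [← (hγ i hi).2.1, hends i hi, hzf i (by omega), hzf (i+1) (by omega)]
      rfl
    have hγe : ∀ i, i < k → γ i ≠ e := fun i hi => (hγ i hi).1
    have hγH' : ∀ i, i < k → i % 2 = 0 → γ i ∈ H' := fun i hi => (hγ i hi).2.2.1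
    have hγH : ∀ i, i < k → i % 2 = 1 → γ i ∈ H := fun i hi => (hγ i hi).2.2.2.1
    have hγlift : ∀ i, i < k → ∀ X : Finset G.E,
        cs i ∈ liftEdges G e u v X ↔ γ i ∈ X := fun i hi => (hγ i hi).2.2.2.2
    have hγinj : ∀ i j, i < k → j < k → γ i = γ j → i = j := by
      intro i j hi hj hij
      have h2 : s(zf i, zf (i+1)) = s(zf j, zf (j+1)) := by
        rw [← hgends i hi, ← hgends j hj, hij]
      rw [Sym2.eq_iff] at h2
      rcases h2 with ⟨h3, _⟩ | ⟨h3, h4⟩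
      · exact hzinj i j (by omega) (by omega) h3
      · have e1 := hzinj i (j+1) (by omega) (by omega) h3
        have e2 := hzinj (i+1) j (by omega) (by omega) h4
        omega
    set C : Finset G.E := insert e ((Finset.range k).image γ) with hCdef
    have heC : e ∈ C := Finset.mem_insert_self e _
    have hγC : ∀ i, i < k → γ i ∈ C := fun i hi =>
      Finset.mem_insert_of_mem (Finset.mem_image.mpr ⟨i, Finset.mem_range.mpr hi, rfl⟩)
    have hCcases : ∀ c ∈ C, c = e ∨ ∃ i, i < k ∧ γ i = c := by
      intro c hc
      rcases Finset.mem_insert.mp hc with rfl | hc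
      · exact Or.inl rfl
      · obtain ⟨i, hi, hic⟩ := Finset.mem_image.mp hc
        exact Or.inr ⟨i, Finset.mem_range.mp hi, hic⟩
    have hCsub : ∀ c ∈ C, c ∈ H ∪ H' := by
      intro c hc
      rcases hCcases c hc with rfl | ⟨i, hi, rfl⟩
      · exact Finset.mem_union_left _ heH
      · rcases Nat.mod_two_eq_zero_or_one i with hp | hp
        · exact Finset.mem_union_right _ (hγH' i hi hp)
        · exact Finset.mem_union_left _ (hγH i hi hp)
    have hCcard : C.card = k + 1 := by
      rw [hCdef, Finset.card_insert_of_notMem, Finset.card_image_of_injOn, Finset.card_range]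
      · intro i hi j hj hij
        exact hγinj i j (Finset.mem_range.mp (Finset.mem_coe.mp hi))
          (Finset.mem_range.mp (Finset.mem_coe.mp hj)) hij
      · intro h
        obtain ⟨i, hi, hic⟩ := Finset.mem_image.mp h
        exact hγe i (Finset.mem_range.mp hi) hic
    have hCends : ∀ c ∈ C, ∀ z ∈ G.ends c, ∃ j, j ≤ k ∧ zf j = z := by
      intro c hc z hz
      rcases hCcases c hc with rfl | ⟨i, hi, rfl⟩
      · rw [he, Sym2.mem_iff] at hz
        rcases hz with rfl | rfl
        · exact ⟨k, le_rfl, hzk⟩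
        · exact ⟨0, by omega, hz0⟩
      · rw [hgends i hi, Sym2.mem_iff] at hz
        rcases hz with rfl | rfl
        · exact ⟨i, by omega, rfl⟩
        · exact ⟨i+1, by omega, rfl⟩
    -- location of matching edges at cycle vertices
    have hHat : ∀ j, j ≤ k → ∀ d ∈ H, zf j ∈ G.ends d → d ∈ C := by
      intro j hj d hdH hzd
      by_cases hj0 : j = 0 ∨ j = k
      · have hze : zf j ∈ G.ends e := by
          rcases hj0 with rfl | rfl
          · rw [hz0]; exact right_mem_ends he
          · rw [hzk]; exact left_mem_ends he
        exact (matching_unique hH hdH heH hzd hze) ▸ heC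
      · push_neg at hj0
        have hj1 : 1 ≤ j ∧ j < k := ⟨by omega, lt_of_le_of_ne hj hj0.2⟩
        rcases Nat.mod_two_eq_zero_or_one j with hp | hp
        · have hmem : zf j ∈ G.ends (γ (j-1)) := by
            have := right_mem_ends (hgends (j-1) (by omega))
            rwa [show j-1+1=j by omega] at this
          exact (matching_unique hH hdH (hγH (j-1) (by omega) (by omega)) hzd hmem) ▸
            hγC (j-1) (by omega)
        · have hmem : zf j ∈ G.ends (γ j) := left_mem_ends (hgends j hj1.2)
          exact (matching_unique hH hdH (hγH j hj1.2 hp) hzd hmem) ▸ hγC j hj1.2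
    have hH'at : ∀ j, j ≤ k → ∀ d ∈ H', zf j ∈ G.ends d → d ∈ C := by
      intro j hj d hdH hzd
      rcases Nat.mod_two_eq_zero_or_one j with hp | hp
      · have hjk2 : j < k := by
          rcases eq_or_lt_of_le hj with rfl | h
          · omega
          · exact h
        have hmem : zf j ∈ G.ends (γ j) := left_mem_ends (hgends j hjk2)
        exact (matching_unique hH' hdH (hγH' j hjk2 hp) hzd hmem) ▸ hγC j hjk2
      · have hmem : zf j ∈ G.ends (γ (j-1)) := by
          have := right_mem_ends (hgends (j-1) (by omega))
          rwa [show j-1+1=j by omega] at this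
        exact (matching_unique hH' hdH (hγH' (j-1) (by omega) (by omega)) hzd hmem) ▸
          hγC (j-1) (by omega)
    -- two distinct cycle edges at each cycle vertex
    have hTwo : ∀ j, j ≤ k → ∃ c1 c2, c1 ∈ C ∧ c2 ∈ C ∧ c1 ∈ H ∧ c2 ∈ H' ∧
        zf j ∈ G.ends c1 ∧ zf j ∈ G.ends c2 := by
      intro j hj
      have hc2 : ∃ c2, c2 ∈ C ∧ c2 ∈ H' ∧ zf j ∈ G.ends c2 := by
        rcases Nat.mod_two_eq_zero_or_one j with hp | hp
        · have hjk2 : j < k := by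
            rcases eq_or_lt_of_le hj with rfl | h
            · omega
            · exact h
          exact ⟨γ j, hγC j hjk2, hγH' j hjk2 hp, left_mem_ends (hgends j hjk2)⟩
        · refine ⟨γ (j-1), hγC (j-1) (by omega), hγH' (j-1) (by omega) (by omega), ?_⟩
          have := right_mem_ends (hgends (j-1) (by omega))
          rwa [show j-1+1=j by omega] at this
      obtain ⟨c2, hc2C, hc2H', hc2m⟩ := hc2
      by_cases hj0 : j = 0 ∨ j = k
      · have hze : zf j ∈ G.ends e := by
          rcases hj0 with rfl | rfl
          · rw [hz0]; exact right_mem_ends he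
          · rw [hzk]; exact left_mem_ends he
        exact ⟨e, c2, heC, hc2C, heH, hc2H', hze, hc2m⟩
      · push_neg at hj0
        have hj1 : 1 ≤ j ∧ j < k := ⟨by omega, lt_of_le_of_ne hj hj0.2⟩
        rcases Nat.mod_two_eq_zero_or_one j with hp | hp
        · refine ⟨γ (j-1), c2, hγC (j-1) (by omega), hc2C, hγH (j-1) (by omega) (by omega),
            hc2H', ?_, hc2m⟩
          have := right_mem_ends (hgends (j-1) (by omega))
          rwa [show j-1+1=j by omega] at this
        · exact ⟨γ j, c2, hγC j hj1.2, hc2C, hγH j hj1.2 hp, hc2H',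
            left_mem_ends (hgends j hj1.2), hc2m⟩
    -- a branch vertex exists
    have hbranch : ∃ j, j ≤ k ∧ 3 ≤ G.deg (zf j) := by
      by_contra hc
      push_neg at hc
      have hdeg2 : ∀ j, j ≤ k → G.deg (zf j) = 2 := by
        intro j hj
        have := hδ (zf j)
        have := hc j hj
        omega
      have honC : ∀ j, j ≤ k → ∀ d : G.E, zf j ∈ G.ends d → d ∈ C := by
        intro j hj d hzd
        obtain ⟨c1, c2, hc1C, hc2C, hc1H, hc2H', hm1, hm2⟩ := hTwo j hj
        by_cases hd1 : d = c1
        · exact hd1 ▸ hc1C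
        by_cases hd2 : d = c2
        · exact hd2 ▸ hc2C
        have hc12 : c1 ≠ c2 := fun h => Finset.disjoint_left.mp hdisj hc1H (h ▸ hc2H')
        have := three_edges_deg hd1 hd2 hc12 hzd hm1 hm2
        have := hdeg2 j hj
        omega
      have hZ : ∀ y : G.V, ∃ j, j ≤ k ∧ zf j = y := by
        intro y
        have hrt := hconn v y
        induction hrt with
        | refl => exact ⟨0, by omega, hz0⟩
        | tail hab hbc ih =>
          obtain ⟨j, hj, hjz⟩ := ih
          obtain ⟨d, hd⟩ := hbc
          have hmem : zf j ∈ G.ends d := hjz ▸ left_mem_ends hd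
          have hdC := honC j hj d hmem
          exact hCends d hdC _ (right_mem_ends hd)
      have hall2 : ∀ y : G.V, G.deg y = 2 := by
        intro y
        obtain ⟨j, hj, rfl⟩ := hZ y
        exact hdeg2 j hj
      have hEC : ∀ d : G.E, d ∈ C := by
        intro d
        obtain ⟨⟨a, b⟩, hab⟩ := Quot.exists_rep (G.ends d)
        have hmem : a ∈ G.ends d := left_mem_ends hab.symm
        obtain ⟨j, hj, hjz⟩ := hZ a
        exact honC j hj d (hjz ▸ hmem)
      have hCuniv : C = Finset.univ := Finset.eq_univ_of_forall hEC
      have hcard : Fintype.card G.E = k + 1 := by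
        rw [← Finset.card_univ, ← hCuniv, hCcard]
      exact hnotEvenCycle ⟨hall2, by rw [hcard]; exact Nat.even_iff.mpr (by omega)⟩
    obtain ⟨j₀, hj₀k, hj₀3⟩ := hbranch
    obtain ⟨c1, c2, hc1C, hc2C, hc1H, hc2H', hm1, hm2⟩ := hTwo j₀ hj₀k
    have hUniqC : ∀ d ∈ C, zf j₀ ∈ G.ends d → d = c1 ∨ d = c2 := by
      intro d hdC hzd
      rcases Finset.mem_union.mp (hCsub d hdC) with hdH | hdH'
      · exact Or.inl (matching_unique hH hdH hc1H hzd hm1)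
      · exact Or.inr (matching_unique hH' hdH' hc2H' hzd hm2)
    -- a third edge g at the branch vertex
    have hnotsub : ¬ ((Finset.univ.filter fun d => zf j₀ ∈ G.ends d) ⊆ {c1, c2}) := by
      intro hsub
      have h1 := Finset.card_le_card hsub
      have h2 : ({c1, c2} : Finset G.E).card ≤ 2 := Finset.card_insert_le _ _ |>.trans (by simp)
      rw [← deg_eq_card hloopless] at h1
      omega
    obtain ⟨g, hgfil, hgnot⟩ := Finset.not_subset.mp hnotsub
    have hbg : zf j₀ ∈ G.ends g := (Finset.mem_filter.mp hgfil).2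
    have hgc12 : g ≠ c1 ∧ g ≠ c2 := by
      constructor <;> intro h <;> exact hgnot (by simp [h])
    have hgH : g ∉ H := fun h => hgc12.1 (matching_unique hH h hc1H hbg hm1)
    have hgH' : g ∉ H' := fun h => hgc12.2 (matching_unique hH' h hc2H' hbg hm2)
    have hgC : g ∉ C := by
      intro h
      rcases hUniqC g h hbg with rfl | rfl
      · exact hgc12.1 rfl
      · exact hgc12.2 rfl
    have hge : g ≠ e := fun h => hgC (h ▸ heC)
    obtain ⟨y, hyb, hgends2⟩ := exists_other_of_not_diag (hloopless g) hbg
    have hymem : y ∈ G.ends g := right_mem_ends hgends2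
    have h3y : ¬ 3 ≤ G.deg y := fun h => hedge g (zf j₀) y hgends2 ⟨hj₀3, h⟩
    have hynotZ : ∀ j, j ≤ k → zf j ≠ y := by
      intro j hj hjy
      obtain ⟨c1', c2', hc1C', hc2C', hc1H', hc2H'', hm1', hm2'⟩ := hTwo j hj
      have hc12' : c1' ≠ c2' := fun h => Finset.disjoint_left.mp hdisj hc1H' (h ▸ hc2H'')
      have hg1 : g ≠ c1' := fun h => hgC (h ▸ hc1C')
      have hg2 : g ≠ c2' := fun h => hgC (h ▸ hc2C')
      rw [hjy] at hm1' hm2'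
      exact h3y (three_edges_deg hg1 hg2 hc12' hymem hm1' hm2')
    have hysat : ¬ G.Saturated H y ∨ ¬ G.Saturated H' y := by
      by_contra hcc
      push_neg at hcc
      obtain ⟨d1, hd1, hyd1⟩ := hcc.1
      obtain ⟨d2, hd2, hyd2⟩ := hcc.2
      have h12 : d1 ≠ d2 := fun h => Finset.disjoint_left.mp hdisj hd1 (h ▸ hd2)
      have hg1 : g ≠ d1 := fun h => hgH (h ▸ hd1)
      have hg2 : g ≠ d2 := fun h => hgH' (h ▸ hd2)
      exact h3y (three_edges_deg hg1 hg2 h12 hymem hyd1 hyd2)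
    -- ============ the subdivided cycle in G' and the recolouring ============
    have hn2 : 0 < k + 2 := by omega
    set L : ℕ → (G.subdivideOnce e u v).E :=
      fun i => if i < k then cs i else if i = k then Sum.inr true else Sum.inr false with hLdef
    set X : ℕ → (G.subdivideOnce e u v).V :=
      fun j => if j ≤ k then xs j else Sum.inr () with hXdef
    have hLlt : ∀ i, i < k → L i = cs i := fun i hi => if_pos hi
    have hLk : L k = Sum.inr true := by simp [hLdef]
    have hLk1 : L (k+1) = Sum.inr false := by simp [hLdef]
    have hXle : ∀ j, j ≤ k → X j = xs j := fun j hj => if_pos hj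
    have hXk1 : X (k+1) = Sum.inr () := by simp [hXdef]
    have hpinj : ∀ t t', t ≤ k+1 → t' ≤ k+1 → (j₀+t) % (k+2) = (j₀+t') % (k+2) → t = t' := by
      intro t t' ht ht' hee
      have h2 : t % (k+2) = t' % (k+2) := Nat.ModEq.add_left_cancel' j₀ hee
      rw [Nat.mod_eq_of_lt (by omega), Nat.mod_eq_of_lt (by omega)] at h2
      exact h2
    have hLends : ∀ i, i < k+2 →
        (G.subdivideOnce e u v).ends (L i) = s(X i, X ((i+1) % (k+2))) := by
      intro i hi
      by_cases h1 : i < k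
      · rw [hLlt i h1, hXle i (by omega), Nat.mod_eq_of_lt (by omega), hXle (i+1) (by omega)]
        exact hends i h1
      by_cases h2 : i = k
      · rw [h2, hLk, hXle k le_rfl, hxk, Nat.mod_eq_of_lt (by omega), hXk1]
      · have h3 : i = k+1 := by omega
        rw [h3, hLk1, hXk1, show (k+1+1) % (k+2) = 0 by simp, hXle 0 (by omega), hhead]
        rw [show (G.subdivideOnce e u v).ends (Sum.inr false) = s(Sum.inl v, Sum.inr ()) from rfl]
        exact Sym2.eq_swap
    have hXinj : ∀ i j, i ≤ k+1 → j ≤ k+1 → X i = X j → i = j := by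
      intro i j hi hj hij
      by_cases h1 : i ≤ k <;> by_cases h2 : j ≤ k
      · rw [hXle i h1, hXle j h2] at hij
        exact hinj i j h1 h2 hij
      · exfalso
        obtain ⟨z, hz⟩ := xinl i h1
        rw [hXle i h1, hz, show j = k+1 by omega, hXk1] at hij
        exact nomatch hij
      · exfalso
        obtain ⟨z, hz⟩ := xinl j h2
        rw [hXle j h2, hz, show i = k+1 by omega, hXk1] at hij
        exact nomatch hij
      · omega
    have hcsne : ∀ i i', i < k → i' < k → i ≠ i' → cs i ≠ cs i' := by
      intro i i' hi hi' hne' heq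
      have h2 : s(xs i, xs (i+1)) = s(xs i', xs (i'+1)) := by
        rw [← hends i hi, ← hends i' hi', heq]
      rw [Sym2.eq_iff] at h2
      rcases h2 with ⟨h3, _⟩ | ⟨h3, h4⟩
      · exact hne' (hinj i i' (by omega) (by omega) h3)
      · have e1 := hinj i (i'+1) (by omega) (by omega) h3
        have e2 := hinj (i+1) i' (by omega) (by omega) h4
        omega
    have hLinj : ∀ i j, i < k+2 → j < k+2 → L i = L j → i = j := by
      intro i j hi hj hij
      by_cases h1 : i < k <;> by_cases h2 : j < k
      · by_contra hne'
        exact hcsne i j h1 h2 hne' (by rw [← hLlt i h1, ← hLlt j h2, hij])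
      · exfalso
        obtain ⟨f, hf, hEq, _, _⟩ := csinl i h1
        rw [hLlt i h1, hEq] at hij
        rcases (by omega : j = k ∨ j = k+1) with h4 | h4
        · rw [h4, hLk] at hij; exact nomatch hij
        · rw [h4, hLk1] at hij; exact nomatch hij
      · exfalso
        obtain ⟨f, hf, hEq, _, _⟩ := csinl j h2
        rw [hLlt j h2, hEq] at hij
        rcases (by omega : i = k ∨ i = k+1) with h4 | h4
        · rw [h4, hLk] at hij; exact nomatch hij.symm
        · rw [h4, hLk1] at hij; exact nomatch hij.symm
      · rcases (by omega : i = k ∨ i = k+1) with h4 | h4 <;>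
          rcases (by omega : j = k ∨ j = k+1) with h5 | h5
        · omega
        · rw [h4, h5, hLk, hLk1] at hij
          exact absurd (Sum.inr_injective hij) (by simp)
        · rw [h4, h5, hLk1, hLk] at hij
          exact absurd (Sum.inr_injective hij) (by simp)
        · omega
    have hLcover : ∀ a, a < k+2 → ∀ z, z ∈ (G.subdivideOnce e u v).ends (L a) →
        ∃ m, m ≤ k+1 ∧ X m = z := by
      intro a ha z hz
      rw [hLends a ha, Sym2.mem_iff] at hz
      rcases hz with rfl | rfl
      · exact ⟨a, by omega, rfl⟩
      · exact ⟨(a+1) % (k+2), by have := Nat.mod_lt (a+1) hn2; omega, rfl⟩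
    have hppp : ∀ t : ℕ, ((j₀ + t) % (k+2) + 1) % (k+2) = (j₀ + (t+1)) % (k+2) := by
      intro t
      rw [Nat.mod_add_mod, ← Nat.add_assoc]
    have hgεends : (G.subdivideOnce e u v).ends (Sum.inl ⟨g, hge⟩) =
        s(Sum.inl (zf j₀), Sum.inl y) := by
      rw [ends_inl, hgends2, Sym2.map_pair_eq]
    have hyX : ∀ m, m ≤ k+1 → X m ≠ Sum.inl y := by
      intro m hm heq
      by_cases h1 : m ≤ k
      · rw [hXle m h1, hzf m h1] at heq
        exact hynotZ m h1 (Sum.inl_injective heq)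
      · rw [show m = k+1 by omega, hXk1] at heq
        exact nomatch heq
    have hbX : X j₀ = Sum.inl (zf j₀) := by rw [hXle j₀ hj₀k, hzf j₀ hj₀k]
    have hLnl : ∀ a, a < k+2 → ¬ (G.subdivideOnce e u v).IsLoop (L a) := by
      intro a ha
      by_cases h1 : a < k
      · rw [hLlt a h1]
        rcases Nat.mod_two_eq_zero_or_one a with hp | hp
        · exact hB.1 _ (hcolB a h1 hp)
        · exact hA.1 _ (hcolA a h1 hp)
      · rcases (by omega : a = k ∨ a = k+1) with rfl | rfl
        · rw [hLk]
          intro hl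
          rw [IsLoop, show (G.subdivideOnce e u v).ends (Sum.inr true) =
            s(Sum.inl u, Sum.inr ()) from rfl, Sym2.mk_isDiag_iff] at hl
          exact nomatch hl
        · rw [hLk1]
          intro hl
          rw [IsLoop, show (G.subdivideOnce e u v).ends (Sum.inr false) =
            s(Sum.inl v, Sum.inr ()) from rfl, Sym2.mk_isDiag_iff] at hl
          exact nomatch hl
    have hLshare : ∀ a b, a < k+2 → b < k+2 → L a ≠ L b →
        ∀ z, z ∈ (G.subdivideOnce e u v).ends (L a) →
          z ∈ (G.subdivideOnce e u v).ends (L b) →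
          (a = (b+1) % (k+2) ∨ b = (a+1) % (k+2)) := by
      intro a b ha hb hne' z hza hzb
      have hane : a ≠ b := fun h => hne' (by rw [h])
      have hma : (a+1) % (k+2) ≤ k+1 := by have := Nat.mod_lt (a+1) hn2; omega
      have hmb : (b+1) % (k+2) ≤ k+1 := by have := Nat.mod_lt (b+1) hn2; omega
      rw [hLends a ha, Sym2.mem_iff] at hza
      rw [hLends b hb, Sym2.mem_iff] at hzb
      rcases hza with rfl | rfl
      · rcases hzb with h | h
        · exact absurd (hXinj a b (by omega) (by omega) h) hane
        · exact Or.inl (hXinj a ((b+1) % (k+2)) (by omega) hmb h)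
      · rcases hzb with h | h
        · exact Or.inr ((hXinj ((a+1) % (k+2)) b hma (by omega) h).symm ▸ rfl) 
        · exfalso
          have h2 := hXinj ((a+1) % (k+2)) ((b+1) % (k+2)) hma hmb h
          have h3 : a = b := by
            by_cases hsa : a + 1 = k + 2 <;> by_cases hsb : b + 1 = k + 2
            · omega
            · rw [show a+1 = k+2 from hsa, Nat.mod_self, Nat.mod_eq_of_lt (by omega)] at h2
              omega
            · rw [show b+1 = k+2 from hsb, Nat.mod_self, Nat.mod_eq_of_lt (by omega)] at h2
              omega
            · rw [Nat.mod_eq_of_lt (by omega), Nat.mod_eq_of_lt (by omega)] at h2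
              omega
          exact hane h3
    have hLnotout : ∀ a, a < k+2 → ∀ P : Finset G.E,
        L a ∉ liftEdges G e u v (P \ C) := by
      intro a ha P hmem
      by_cases h1 : a < k
      · rw [hLlt a h1, hγlift a h1] at hmem
        exact (Finset.mem_sdiff.mp hmem).2 (hγC a h1)
      · rcases (by omega : a = k ∨ a = k+1) with rfl | rfl
        · rw [hLk] at hmem; exact inr_not_mem_liftEdges true hmem
        · rw [hLk1] at hmem; exact inr_not_mem_liftEdges false hmem
    have hgεnotL : ∀ a, a < k+2 → (Sum.inl ⟨g, hge⟩ : (G.subdivideOnce e u v).E) ≠ L a := by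
      intro a ha heq
      by_cases h1 : a < k
      · rw [hLlt a h1] at heq
        have : cs a ∈ liftEdges G e u v {g} := by
          rw [← heq]
          exact mem_liftEdges.mpr ⟨g, hge, Finset.mem_singleton_self g, rfl⟩
        rw [hγlift a h1] at this
        exact hgC ((Finset.mem_singleton.mp this) ▸ hγC a h1)
      · rcases (by omega : a = k ∨ a = k+1) with rfl | rfl
        · rw [hLk] at heq; exact nomatch heq
        · rw [hLk1] at heq; exact nomatch heq
    have houtX : ∀ P : Finset G.E, (∀ j, j ≤ k → ∀ d ∈ P, zf j ∈ G.ends d → d ∈ C) →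
        ∀ d' ∈ liftEdges G e u v (P \ C), ∀ z, z ∈ (G.subdivideOnce e u v).ends d' →
          ∀ m, m ≤ k+1 → X m ≠ z := by
      intro P hPat d' hd' z hz m hm hXz
      obtain ⟨f, hf, hfP, rfl⟩ := mem_liftEdges.mp hd'
      rw [ends_inl, Sym2.mem_map] at hz
      obtain ⟨a, ha, rfl⟩ := hz
      by_cases hmk : m ≤ k
      · rw [hXle m hmk, hzf m hmk] at hXz
        have haz : zf m = a := Sum.inl_injective hXz
        have := hPat m hmk f (Finset.mem_sdiff.mp hfP).1 (haz ▸ ha)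
        exact (Finset.mem_sdiff.mp hfP).2 this
      · rw [show m = k+1 by omega, hXk1] at hXz
        exact nomatch hXz
    have houty : ∀ P : Finset G.E, ¬ G.Saturated P y →
        ∀ d' ∈ liftEdges G e u v (P \ C), (Sum.inl y : (G.subdivideOnce e u v).V) ∉
          (G.subdivideOnce e u v).ends d' := by
      intro P hPy d' hd' hz
      obtain ⟨f, hf, hfP, rfl⟩ := mem_liftEdges.mp hd'
      rw [ends_inl, Sym2.mem_map] at hz
      obtain ⟨a, ha, haz⟩ := hz
      have : a = y := Sum.inl_injective haz
      exact hPy ⟨f, (Finset.mem_sdiff.mp hfP).1, this ▸ ha⟩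
    set Pc0 : Finset (G.subdivideOnce e u v).E :=
      ((Finset.range (k+1)).filter fun t => t % 2 = 0).image (fun t => L ((j₀+t) % (k+2)))
      with hPc0def
    set Pc1 : Finset (G.subdivideOnce e u v).E :=
      ((Finset.range (k+1)).filter fun t => t % 2 = 1).image (fun t => L ((j₀+t) % (k+2)))
      with hPc1def
    have hPc0mem : ∀ d ∈ Pc0, ∃ t, t ≤ k ∧ t % 2 = 0 ∧ d = L ((j₀+t) % (k+2)) := by
      intro d hd
      obtain ⟨t, ht, htd⟩ := Finset.mem_image.mp hd
      rw [Finset.mem_filter, Finset.mem_range] at ht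
      exact ⟨t, by omega, ht.2, htd.symm⟩
    have hPc1mem : ∀ d ∈ Pc1, ∃ t, t ≤ k ∧ t % 2 = 1 ∧ d = L ((j₀+t) % (k+2)) := by
      intro d hd
      obtain ⟨t, ht, htd⟩ := Finset.mem_image.mp hd
      rw [Finset.mem_filter, Finset.mem_range] at ht
      exact ⟨t, by omega, ht.2, htd.symm⟩
    have hptlt : ∀ t : ℕ, (j₀+t) % (k+2) < k+2 := fun t => Nat.mod_lt _ hn2
    have hp0 : (j₀ + 0) % (k+2) = j₀ := by
      rw [Nat.add_zero, Nat.mod_eq_of_lt (by omega)]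
    -- shared vertex between path edges forces consecutive parameters
    have hPcshare : ∀ t t', t ≤ k → t' ≤ k → L ((j₀+t) % (k+2)) ≠ L ((j₀+t') % (k+2)) →
        ∀ z, z ∈ (G.subdivideOnce e u v).ends (L ((j₀+t) % (k+2))) →
          z ∈ (G.subdivideOnce e u v).ends (L ((j₀+t') % (k+2))) →
          (t = t' + 1 ∨ t' = t + 1) := by
      intro t t' ht ht' hne' z hz hz'
      rcases hLshare _ _ (hptlt t) (hptlt t') hne' z hz hz' with h | h
      · rw [hppp t'] at h
        exact Or.inl (hpinj t (t'+1) (by omega) (by omega) h)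
      · rw [hppp t] at h
        exact Or.inr (hpinj t' (t+1) (by omega) (by omega) h)
    -- the branch vertex is only on the (t even) path edges
    have hbnotPc1 : ∀ t, t ≤ k → t % 2 = 1 →
        (X j₀) ∉ (G.subdivideOnce e u v).ends (L ((j₀+t) % (k+2))) := by
      intro t ht hodd hmem
      rw [hLends _ (hptlt t), Sym2.mem_iff] at hmem
      rcases hmem with h | h
      · have h2 := hXinj j₀ ((j₀+t) % (k+2)) (by omega) (by have := hptlt t; omega) h
        have h3 : (j₀ + 0) % (k+2) = (j₀ + t) % (k+2) := by rw [hp0]; exact h2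
        have := hpinj 0 t (by omega) (by omega) h3
        omega
      · rw [hppp t] at h
        have h2 := hXinj j₀ ((j₀+(t+1)) % (k+2)) (by omega) (by have := hptlt (t+1); omega) h
        have h3 : (j₀ + 0) % (k+2) = (j₀ + (t+1)) % (k+2) := by rw [hp0]; exact h2
        have := hpinj 0 (t+1) (by omega) (by omega) h3
        omega
    -- ============ the builder ============
    have build : ∀ M N : Finset G.E, G.IsMatching M → G.IsMatching N → Disjoint M N →
        (∀ j, j ≤ k → ∀ d ∈ M, zf j ∈ G.ends d → d ∈ C) →
        (∀ j, j ≤ k → ∀ d ∈ N, zf j ∈ G.ends d → d ∈ C) →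
        g ∉ M → g ∉ N → ¬ G.Saturated M y → (∀ c ∈ C, c ∈ M ∨ c ∈ N) →
        ∃ K K' : Finset (G.subdivideOnce e u v).E, (G.subdivideOnce e u v).IsMatching K ∧
          (G.subdivideOnce e u v).IsMatching K' ∧ Disjoint K K' ∧
          K.card + K'.card = M.card + N.card + 1 := by
      intro M N hM hN hMN hMat hNat hgM hgN hyM hCMN
      set outM := liftEdges G e u v (M \ C) with houtMdef
      set outN := liftEdges G e u v (N \ C) with houtNdef
      have houtMm : (G.subdivideOnce e u v).IsMatching outM :=
        matching_liftEdges (matching_subset (Finset.sdiff_subset) hM)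
      have houtNm : (G.subdivideOnce e u v).IsMatching outN :=
        matching_liftEdges (matching_subset (Finset.sdiff_subset) hN)
      refine ⟨insert (Sum.inl ⟨g, hge⟩) (outM ∪ Pc1), outN ∪ Pc0, ⟨?_, ?_⟩, ⟨?_, ?_⟩, ?_, ?_⟩
      · -- K has no loops
        intro d hd
        rcases Finset.mem_insert.mp hd with rfl | hd'
        · intro hl
          rw [IsLoop, hgεends, Sym2.mk_isDiag_iff] at hl
          exact hyb (Sum.inl_injective hl).symm
        rcases Finset.mem_union.mp hd' with hd2 | hd2
        · exact houtMm.1 d hd2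
        · obtain ⟨t, ht, _, rfl⟩ := hPc1mem d hd2
          exact hLnl _ (hptlt t)
      · -- K pairwise
        intro d1 hd1 d2 hd2 hne' z hz1 hz2
        rcases Finset.mem_insert.mp hd1 with rfl | hd1'
        · -- d1 = gε
          rw [hgεends, Sym2.mem_iff] at hz1
          rcases Finset.mem_insert.mp hd2 with rfl | hd2'
          · exact hne' rfl
          rcases Finset.mem_union.mp hd2' with hd2o | hd2p
          · rcases hz1 with rfl | rfl
            · exact houtX M hMat d2 hd2o _ hz2 j₀ (by omega) hbX
            · exact houty M hyM d2 hd2o hz2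
          · obtain ⟨t, ht, hodd, rfl⟩ := hPc1mem d2 hd2p
            rcases hz1 with rfl | rfl
            · exact hbnotPc1 t ht hodd (hbX ▸ hz2)
            · obtain ⟨m, hm, hXm⟩ := hLcover _ (hptlt t) _ hz2
              exact hyX m hm hXm
        rcases Finset.mem_union.mp hd1' with hd1o | hd1p
        · -- d1 out
          rcases Finset.mem_insert.mp hd2 with rfl | hd2'
          · rw [hgεends, Sym2.mem_iff] at hz2
            rcases hz2 with rfl | rfl
            · exact houtX M hMat d1 hd1o _ hz1 j₀ (by omega) hbX
            · exact houty M hyM d1 hd1o hz1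
          rcases Finset.mem_union.mp hd2' with hd2o | hd2p
          · exact houtMm.2 d1 hd1o d2 hd2o hne' z hz1 hz2
          · obtain ⟨t, ht, _, rfl⟩ := hPc1mem d2 hd2p
            obtain ⟨m, hm, hXm⟩ := hLcover _ (hptlt t) _ hz2
            exact houtX M hMat d1 hd1o z hz1 m hm hXm
        · -- d1 path
          obtain ⟨t, ht, hodd, rfl⟩ := hPc1mem d1 hd1p
          rcases Finset.mem_insert.mp hd2 with rfl | hd2'
          · rw [hgεends, Sym2.mem_iff] at hz2
            rcases hz2 with rfl | rfl
            · exact hbnotPc1 t ht hodd (hbX ▸ hz1)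
            · obtain ⟨m, hm, hXm⟩ := hLcover _ (hptlt t) _ hz1
              exact hyX m hm hXm
          rcases Finset.mem_union.mp hd2' with hd2o | hd2p
          · obtain ⟨m, hm, hXm⟩ := hLcover _ (hptlt t) _ hz1
            exact houtX M hMat d2 hd2o z hz2 m hm hXm
          · obtain ⟨t', ht', hodd', rfl⟩ := hPc1mem d2 hd2p
            rcases hPcshare t t' ht ht' hne' z hz1 hz2 with h | h <;> omega
      · -- K' has no loops
        intro d hd
        rcases Finset.mem_union.mp hd with hd2 | hd2
        · exact houtNm.1 d hd2
        · obtain ⟨t, ht, _, rfl⟩ := hPc0mem d hd2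
          exact hLnl _ (hptlt t)
      · -- K' pairwise
        intro d1 hd1 d2 hd2 hne' z hz1 hz2
        rcases Finset.mem_union.mp hd1 with hd1o | hd1p
        · rcases Finset.mem_union.mp hd2 with hd2o | hd2p
          · exact houtNm.2 d1 hd1o d2 hd2o hne' z hz1 hz2
          · obtain ⟨t, ht, _, rfl⟩ := hPc0mem d2 hd2p
            obtain ⟨m, hm, hXm⟩ := hLcover _ (hptlt t) _ hz2
            exact houtX N hNat d1 hd1o z hz1 m hm hXm
        · obtain ⟨t, ht, heven, rfl⟩ := hPc0mem d1 hd1p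
          rcases Finset.mem_union.mp hd2 with hd2o | hd2p
          · obtain ⟨m, hm, hXm⟩ := hLcover _ (hptlt t) _ hz1
            exact houtX N hNat d2 hd2o z hz2 m hm hXm
          · obtain ⟨t', ht', heven', rfl⟩ := hPc0mem d2 hd2p
            rcases hPcshare t t' ht ht' hne' z hz1 hz2 with h | h <;> omega
      · -- Disjoint K K'
        rw [Finset.disjoint_left]
        intro d hdK hdK'
        rcases Finset.mem_insert.mp hdK with rfl | hdK2
        · rcases Finset.mem_union.mp hdK' with hdo | hdp
          · rw [houtNdef, inl_mem_liftEdges] at hdo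
            exact hgN (Finset.mem_sdiff.mp hdo).1
          · obtain ⟨t, ht, _, heq⟩ := hPc0mem _ hdp
            exact hgεnotL _ (hptlt t) heq
        rcases Finset.mem_union.mp hdK2 with hdo | hdp
        · rcases Finset.mem_union.mp hdK' with hdo' | hdp'
          · exact Finset.disjoint_left.mp
              (disjoint_liftEdges (hMN.mono Finset.sdiff_subset Finset.sdiff_subset)) hdo hdo'
          · obtain ⟨t, ht, _, rfl⟩ := hPc0mem _ hdp'
            exact hLnotout _ (hptlt t) M hdo
        · rcases Finset.mem_union.mp hdK' with hdo' | hdp'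
          · obtain ⟨t, ht, _, rfl⟩ := hPc1mem _ hdp
            exact hLnotout _ (hptlt t) N hdo'
          · obtain ⟨t, ht, hodd, rfl⟩ := hPc1mem _ hdp
            obtain ⟨t', ht', heven, heq⟩ := hPc0mem _ hdp'
            have := hLinj _ _ (hptlt t) (hptlt t') heq
            have := hpinj t t' (by omega) (by omega) this
            omega
      · -- cards
        have hgout : (Sum.inl ⟨g, hge⟩ : (G.subdivideOnce e u v).E) ∉ outM := by
          intro hmem
          rw [houtMdef, inl_mem_liftEdges] at hmem
          exact hgM (Finset.mem_sdiff.mp hmem).1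
        have hgPc1 : (Sum.inl ⟨g, hge⟩ : (G.subdivideOnce e u v).E) ∉ Pc1 := by
          intro hmem
          obtain ⟨t, ht, _, heq⟩ := hPc1mem _ hmem
          exact hgεnotL _ (hptlt t) heq
        have houtPc1 : Disjoint outM Pc1 := by
          rw [Finset.disjoint_left]
          intro d hdo hdp
          obtain ⟨t, ht, _, rfl⟩ := hPc1mem _ hdp
          exact hLnotout _ (hptlt t) M hdo
        have houtPc0 : Disjoint outN Pc0 := by
          rw [Finset.disjoint_left]
          intro d hdo hdp
          obtain ⟨t, ht, _, rfl⟩ := hPc0mem _ hdp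
          exact hLnotout _ (hptlt t) N hdo
        rw [Finset.card_insert_of_notMem (by
          intro hmem
          rcases Finset.mem_union.mp hmem with h | h
          · exact hgout h
          · exact hgPc1 h), Finset.card_union_of_disjoint houtPc1,
          Finset.card_union_of_disjoint houtPc0]
        have hPc0card : Pc0.card = ((Finset.range (k+1)).filter fun t => t % 2 = 0).card := by
          rw [hPc0def]
          apply Finset.card_image_of_injOn
          intro t ht t' ht' heq
          rw [Finset.mem_coe, Finset.mem_filter, Finset.mem_range] at ht ht'
          exact hpinj t t' (by omega) (by omega) (hLinj _ _ (hptlt t) (hptlt t') heq)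
        have hPc1card : Pc1.card = ((Finset.range (k+1)).filter fun t => t % 2 = 1).card := by
          rw [hPc1def]
          apply Finset.card_image_of_injOn
          intro t ht t' ht' heq
          rw [Finset.mem_coe, Finset.mem_filter, Finset.mem_range] at ht ht'
          exact hpinj t t' (by omega) (by omega) (hLinj _ _ (hptlt t) (hptlt t') heq)
        have hfiltersum : ((Finset.range (k+1)).filter fun t => t % 2 = 0).card +
            ((Finset.range (k+1)).filter fun t => t % 2 = 1).card = k + 1 := by
          have h1 := Finset.card_filter_add_card_filter_not
            (s := Finset.range (k+1)) (p := fun t => t % 2 = 0)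
          rw [Finset.card_range] at h1
          have h2 : (Finset.range (k+1)).filter (fun t => ¬ t % 2 = 0) =
              (Finset.range (k+1)).filter fun t => t % 2 = 1 := by
            apply Finset.filter_congr
            intro t _
            constructor <;> intro h <;> omega
          rw [h2] at h1
          exact h1
        have houtMcard : outM.card = M.card - (M ∩ C).card := by
          rw [houtMdef, card_liftEdges, Finset.erase_eq_of_notMem
            (fun h => (Finset.mem_sdiff.mp h).2 heC), ← Finset.sdiff_inter_self_left,
            Finset.card_sdiff_of_subset Finset.inter_subset_left]
        have houtNcard : outN.card = N.card - (N ∩ C).card := by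
          rw [houtNdef, card_liftEdges, Finset.erase_eq_of_notMem
            (fun h => (Finset.mem_sdiff.mp h).2 heC), ← Finset.sdiff_inter_self_left,
            Finset.card_sdiff_of_subset Finset.inter_subset_left]
        have hMCNC : (M ∩ C).card + (N ∩ C).card = k + 1 := by
          have hun : (M ∩ C) ∪ (N ∩ C) = C := by
            ext c
            rw [Finset.mem_union, Finset.mem_inter, Finset.mem_inter]
            constructor
            · rintro (⟨_, h⟩ | ⟨_, h⟩) <;> exact h
            · intro hc
              rcases hCMN c hc with h | h
              · exact Or.inl ⟨h, hc⟩
              · exact Or.inr ⟨h, hc⟩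
          have hd2 : Disjoint (M ∩ C) (N ∩ C) :=
            hMN.mono Finset.inter_subset_left Finset.inter_subset_left
          calc (M ∩ C).card + (N ∩ C).card = ((M ∩ C) ∪ (N ∩ C)).card :=
                (Finset.card_union_of_disjoint hd2).symm
            _ = C.card := by rw [hun]
            _ = k + 1 := hCcard
        have hMle : (M ∩ C).card ≤ M.card := Finset.card_le_card Finset.inter_subset_left
        have hNle : (N ∩ C).card ≤ N.card := Finset.card_le_card Finset.inter_subset_left
        omega
    rcases hysat with hy1 | hy2
    · obtain ⟨K, K', h1, h2, h3, h4⟩ := build H H' hH hH' hdisj hHat hH'at hgH hgH' hy1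
        (fun c hc => Finset.mem_union.mp (hCsub c hc))
      exact ⟨K, K', h1, h2, h3, by omega⟩
    · obtain ⟨K, K', h1, h2, h3, h4⟩ := build H' H hH' hH hdisj.symm hH'at hHat hgH' hgH hy2
        (fun c hc => (Finset.mem_union.mp (hCsub c hc)).symm)
      exact ⟨K, K', h1, h2, h3, by omega⟩


  · -- the path case : flip and insert both new edges
    have hucase' : ∀ j, j ≤ k → xs j ≠ (Sum.inl u : (G.subdivideOnce e u v).V) :=
      fun j hj h => hucase ⟨j, hj, h⟩
    obtain ⟨A2, B2, hA2, hB2, hAB2, hU2, hvB2, hout⟩ := flip_lemma hA hB hAB hx₀ hw tB tA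
    have hωnotxs : ∀ j, j ≤ k → xs j ≠ Sum.inr () := by
      intro j hj h
      obtain ⟨z, hz⟩ := xinl j hj
      rw [hz] at h
      exact nomatch h
    have hωA2 : ¬ (G.subdivideOnce e u v).Saturated A2 (Sum.inr ()) :=
      fun h => not_sat_liftEdges_inr ((hout _ hωnotxs).1 h)
    have hωB2 : ¬ (G.subdivideOnce e u v).Saturated B2 (Sum.inr ()) :=
      fun h => not_sat_liftEdges_inr ((hout _ hωnotxs).2 h)
    have huA2 : ¬ (G.subdivideOnce e u v).Saturated A2 (Sum.inl u) :=
      fun h => huA ((hout _ hucase').1 h)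
    have hinrU : ∀ b : Bool, (Sum.inr b : (G.subdivideOnce e u v).E) ∉ A2 ∪ B2 := by
      intro b h
      rw [hU2] at h
      exact inr_not_mem_union_lift b h
    refine ⟨insert (Sum.inr true) A2, insert (Sum.inr false) B2, ?_, ?_, ?_, ?_⟩
    · exact matching_insert hA2 ends_eps1 (fun h => nomatch h) huA2 hωA2
    · exact matching_insert hB2 ends_eps2 (fun h => nomatch h) hvB2 hωB2
    · rw [Finset.disjoint_left]
      intro a ha ha'
      rcases Finset.mem_insert.mp ha with rfl | ha
      · rcases Finset.mem_insert.mp ha' with h | h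
        · exact Bool.noConfusion (Sum.inr_injective h)
        · exact hinrU true (Finset.mem_union_right _ h)
      · rcases Finset.mem_insert.mp ha' with rfl | h
        · exact hinrU false (Finset.mem_union_left _ ha)
        · exact Finset.disjoint_left.mp hAB2 ha h
    · have h1 : (Sum.inr true : (G.subdivideOnce e u v).E) ∉ A2 :=
        fun h => hinrU true (Finset.mem_union_left _ h)
      have h2 : (Sum.inr false : (G.subdivideOnce e u v).E) ∉ B2 :=
        fun h => hinrU false (Finset.mem_union_right _ h)
      rw [Finset.card_insert_of_notMem h1, Finset.card_insert_of_notMem h2]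
      have hcards : A2.card + B2.card = A.card + B.card := by
        rw [← Finset.card_union_of_disjoint hAB2, ← Finset.card_union_of_disjoint hAB, hU2]
      have hcA : A.card = H.card - 1 := by
        rw [hAdef, card_liftEdges, Finset.card_erase_of_mem heH]
      have hcB : B.card = H'.card := by
        rw [hBdef, card_liftEdges, Finset.erase_eq_of_notMem heH']
      have hHpos : 1 ≤ H.card := Finset.card_pos.mpr ⟨e, heH⟩
      omega

end Case2

section Main
variable {G : Multigraph} {e : G.E} {u v : G.V}

theorem nu2_subdivideOnce_ge'
    (G : Multigraph) (hloopless : G.Loopless) (hconn : G.Connected)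
    (hδ : ∀ v : G.V, 2 ≤ G.deg v)
    (hnotEvenCycle : ¬ ((∀ v : G.V, G.deg v = 2) ∧ Even (Fintype.card G.E)))
    (hedge : ∀ f : G.E, ∀ a b : G.V, G.ends f = s(a, b) → ¬ (3 ≤ G.deg a ∧ 3 ≤ G.deg b))
    (e : G.E) (u v : G.V) (he : G.ends e = s(u, v)) :
    (G.subdivideOnce e u v).nu2 ≥ G.nu2 + 1 := by
  obtain ⟨H, H', hH, hH', hdisj, hsum⟩ := nu2_achieved G
  have huv : u ≠ v := by
    intro h
    apply hloopless e
    rw [IsLoop, he, h]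
    exact Sym2.mk_isDiag_iff.mpr rfl
  suffices h : ∃ K K' : Finset (G.subdivideOnce e u v).E,
      (G.subdivideOnce e u v).IsMatching K ∧ (G.subdivideOnce e u v).IsMatching K' ∧
      Disjoint K K' ∧ K.card + K'.card = G.nu2 + 1 by
    obtain ⟨K, K', h1, h2, h3, h4⟩ := h
    have := pair_le_nu2 h1 h2 h3
    omega
  by_cases heH : e ∈ H
  · obtain ⟨K, K', h1, h2, h3, h4⟩ :=
      case2' G hloopless hconn hδ hnotEvenCycle hedge e u v he huv H H' hH hH' hdisj heH
    exact ⟨K, K', h1, h2, h3, by omega⟩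
  by_cases heH' : e ∈ H'
  · obtain ⟨K, K', h1, h2, h3, h4⟩ :=
      case2' G hloopless hconn hδ hnotEvenCycle hedge e u v he huv H' H hH' hH hdisj.symm heH'
    exact ⟨K, K', h1, h2, h3, by omega⟩
  -- Case 1 : e in neither matching
  have easy : ∀ (M N : Finset G.E), G.IsMatching M → G.IsMatching N → Disjoint M N →
      e ∉ M → e ∉ N → M.card + N.card = G.nu2 →
      ∀ (ε : (G.subdivideOnce e u v).E) (d : G.V),
        (G.subdivideOnce e u v).ends ε = s(Sum.inl d, Sum.inr ()) →
        (∀ X : Finset G.E, ε ∉ liftEdges G e u v X) → ¬ G.Saturated M d →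
      ∃ K K' : Finset (G.subdivideOnce e u v).E,
        (G.subdivideOnce e u v).IsMatching K ∧ (G.subdivideOnce e u v).IsMatching K' ∧
        Disjoint K K' ∧ K.card + K'.card = G.nu2 + 1 := by
    intro M N hM hN hMN heM heN hMsum ε d hεe hεl hfree
    refine ⟨insert ε (liftEdges G e u v M), liftEdges G e u v N, ?_, matching_liftEdges hN,
      ?_, ?_⟩
    · refine matching_insert (matching_liftEdges hM) hεe (fun h => nomatch h) ?_
        (not_sat_liftEdges_inr)
      intro hsat
      rw [sat_liftEdges] at hsat
      obtain ⟨f, hf, hzf⟩ := hsat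
      exact hfree ⟨f, Finset.mem_of_mem_erase hf, hzf⟩
    · rw [Finset.disjoint_left]
      intro a ha ha'
      rcases Finset.mem_insert.mp ha with rfl | ha
      · exact hεl N ha'
      · exact Finset.disjoint_left.mp (disjoint_liftEdges hMN) ha ha'
    · rw [Finset.card_insert_of_notMem (hεl M), card_liftEdges, card_liftEdges,
        Finset.erase_eq_of_notMem heM, Finset.erase_eq_of_notMem heN]
      omega
  have hdeg : G.deg u = 2 ∨ G.deg v = 2 := by
    have h1 := hδ u
    have h2 := hδ v
    have h3 := hedge e u v he
    by_contra hc
    push_neg at hc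
    exact h3 ⟨by omega, by omega⟩
  have satlem : ∀ d : G.V, d ∈ G.ends e → G.deg d = 2 →
      ¬ G.Saturated H d ∨ ¬ G.Saturated H' d := by
    intro d hde hd2
    by_contra hc
    push_neg at hc
    obtain ⟨d1, hd1, hud1⟩ := hc.1
    obtain ⟨d2, hd2', hud2⟩ := hc.2
    have h12 : d1 ≠ d2 := fun h => Finset.disjoint_left.mp hdisj hd1 (h ▸ hd2')
    have h1e : d1 ≠ e := fun h => heH (h ▸ hd1)
    have h2e : d2 ≠ e := fun h => heH' (h ▸ hd2')
    have := three_edges_deg h12 h1e h2e hud1 hud2 hde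
    omega
  rcases hdeg with hd | hd
  · rcases satlem u (left_mem_ends he) hd with hs | hs
    · exact easy H H' hH hH' hdisj heH heH' hsum (Sum.inr true) u ends_eps1
        (fun X => inr_not_mem_liftEdges true) hs
    · exact easy H' H hH' hH hdisj.symm heH' heH (by omega) (Sum.inr true) u ends_eps1
        (fun X => inr_not_mem_liftEdges true) hs
  · rcases satlem v (right_mem_ends he) hd with hs | hs
    · exact easy H H' hH hH' hdisj heH heH' hsum (Sum.inr false) v ends_eps2
        (fun X => inr_not_mem_liftEdges false) hs
    · exact easy H' H hH' hH hdisj.symm heH' heH (by omega) (Sum.inr false) v ends_eps2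
        (fun X => inr_not_mem_liftEdges false) hs

end Main


/-- If G is connected, δ(G) ≥ 2, G is not an even cycle, and no edge joins two
vertices of degree ≥ 3, then subdividing one edge once increases ν₂ by at least one. -/
theorem nu2_subdivideOnce_ge
    (G : Multigraph) (hloopless : G.Loopless) (hconn : G.Connected)
    (hδ : ∀ v : G.V, 2 ≤ G.deg v)
    (hnotEvenCycle : ¬ ((∀ v : G.V, G.deg v = 2) ∧ Even (Fintype.card G.E)))
    (hedge : ∀ f : G.E, ∀ a b : G.V, G.ends f = s(a, b) → ¬ (3 ≤ G.deg a ∧ 3 ≤ G.deg b))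
    (e : G.E) (u v : G.V) (he : G.ends e = s(u, v)) :
    (G.subdivideOnce e u v).nu2 ≥ G.nu2 + 1 :=
  nu2_subdivideOnce_ge' G hloopless hconn hδ hnotEvenCycle hedge e u v he

end Multigraph
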